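/- Let f, n, m be natural numbers with n > 3f and m ≥ n − f. Let P be a multiset of real numbers with card P = n and let U be a sub-multiset of P with card U = m. Then the (f+1)-th smallest element of P lies in the range of U: min U ≤ P_(f+1) ≤ max U. -/

import Mathlib

/-- The k-th smallest element (1-indexed, counted with multiplicity) of a
multiset of real numbers. -/
noncomputable def nth (S : Multiset ℝ) (k : ℕ) : ℝ :=
  (S.sort (· ≤ ·)).getD (k - 1) 0

/-- The smallest element of a (nonempty) multiset of reals. -/
noncomputable def mmin (S : Multiset ℝ) : ℝ := nth S 1

/-- The largest element of a (nonempty) multiset of reals. -/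
noncomputable def mmax (S : Multiset ℝ) : ℝ := nth S S.card

/-- The diameter of a (nonempty) multiset of reals. -/
noncomputable def mdiam (S : Multiset ℝ) : ℝ := mmax S - mmin S

lemma sorted_getElem_le {l : List ℝ} (hl : l.Pairwise (· ≤ ·)) {i j : ℕ}
    (hi : i < l.length) (hj : j < l.length) (hij : i ≤ j) : l[i] ≤ l[j] := by
  rcases eq_or_lt_of_le hij with h | h
  · subst h; exact le_refl _
  · exact List.pairwise_iff_getElem.mp hl i j hi hj h

lemma countP_le_ge (l : List ℝ) (hl : l.Pairwise (· ≤ ·)) (k : ℕ) (hk : k < l.length) :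
    k + 1 ≤ l.countP (fun x => decide (x ≤ l[k])) := by
  have h2 : (l.take (k+1)).countP (fun x => decide (x ≤ l[k])) = k + 1 := by
    rw [List.countP_eq_length.mpr, List.length_take]
    · omega
    · intro a ha
      rw [List.mem_take_iff_getElem] at ha
      obtain ⟨i, hi, rfl⟩ := ha
      simp only [decide_eq_true_eq]
      exact sorted_getElem_le hl (by omega) hk (by omega)
  have h3 := (List.take_sublist (k+1) l).countP_le (p := fun x => decide (x ≤ l[k]))
  omega

lemma countP_ge_ge (l : List ℝ) (hl : l.Pairwise (· ≤ ·)) (k : ℕ) (hk : k < l.length) :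
    l.length - k ≤ l.countP (fun x => decide (l[k] ≤ x)) := by
  have h2 : (l.drop k).countP (fun x => decide (l[k] ≤ x)) = l.length - k := by
    rw [List.countP_eq_length.mpr, List.length_drop]
    intro a ha
    rw [List.mem_iff_getElem] at ha
    obtain ⟨i, hi, rfl⟩ := ha
    rw [List.getElem_drop]
    simp only [decide_eq_true_eq]
    have : i < l.length - k := by simpa using hi
    exact sorted_getElem_le hl hk (by omega) (by omega)
  have h3 := (List.drop_sublist k l).countP_le (p := fun x => decide (l[k] ≤ x))
  omega

lemma mmin_le {U : Multiset ℝ} {u : ℝ} (hu : u ∈ U) : mmin U ≤ u := by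
  have hl : (U.sort (· ≤ ·)).Pairwise (· ≤ ·) := Multiset.pairwise_sort _ _
  have hmem : u ∈ U.sort (· ≤ ·) := by rw [Multiset.mem_sort]; exact hu
  obtain ⟨i, hi, rfl⟩ := List.mem_iff_getElem.mp hmem
  unfold mmin nth
  rw [List.getD_eq_getElem _ _ (by omega)]
  exact sorted_getElem_le hl (by omega) hi (by omega)

lemma le_mmax {U : Multiset ℝ} {u : ℝ} (hu : u ∈ U) : u ≤ mmax U := by
  have hl : (U.sort (· ≤ ·)).Pairwise (· ≤ ·) := Multiset.pairwise_sort _ _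
  have hmem : u ∈ U.sort (· ≤ ·) := by rw [Multiset.mem_sort]; exact hu
  obtain ⟨i, hi, rfl⟩ := List.mem_iff_getElem.mp hmem
  have hlen : (U.sort (· ≤ ·)).length = Multiset.card U := Multiset.length_sort _
  unfold mmax nth
  rw [List.getD_eq_getElem _ _ (by omega)]
  exact sorted_getElem_le hl hi (by omega) (by omega)

theorem stmt0 (f n m : ℕ) (P U : Multiset ℝ)
    (hn : n > 3 * f) (hm : m ≥ n - f)
    (hP : Multiset.card P = n) (hU : U ≤ P) (hUm : Multiset.card U = m) :
    mmin U ≤ nth P (f + 1) ∧ nth P (f + 1) ≤ mmax U := by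
  classical
  have hl : (P.sort (· ≤ ·)).Pairwise (· ≤ ·) := Multiset.pairwise_sort _ _
  have hlen : (P.sort (· ≤ ·)).length = n := by rw [Multiset.length_sort, hP]
  have hfn : f < (P.sort (· ≤ ·)).length := by omega
  set t := (P.sort (· ≤ ·))[f]'hfn with htdef
  have ht : nth P (f + 1) = t := by
    unfold nth
    rw [show f + 1 - 1 = f from rfl, List.getD_eq_getElem _ _ hfn]
  have hPcoe : (↑(P.sort (· ≤ ·)) : Multiset ℝ) = P := Multiset.sort_eq _ _
  have hcoe1 : Multiset.countP (fun x => x ≤ t) P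
      = (P.sort (· ≤ ·)).countP (fun x => decide (x ≤ t)) := by
    conv_lhs => rw [← hPcoe]
    exact Multiset.coe_countP _ _
  have hcoe2 : Multiset.countP (fun x => t ≤ x) P
      = (P.sort (· ≤ ·)).countP (fun x => decide (t ≤ x)) := by
    conv_lhs => rw [← hPcoe]
    exact Multiset.coe_countP _ _
  have hcP1 : f + 1 ≤ Multiset.countP (fun x => x ≤ t) P := by
    rw [hcoe1]
    exact countP_le_ge _ hl f hfn
  have hcP2 : n - f ≤ Multiset.countP (fun x => t ≤ x) P := by
    rw [hcoe2]
    have h := countP_ge_ge _ hl f hfn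
    rw [← htdef] at h
    omega
  have hdecomp : P = (P - U) + U := (tsub_add_cancel_of_le hU).symm
  have hcard : Multiset.card (P - U) = n - m := by
    rw [Multiset.card_sub hU, hP, hUm]
  have hsplit : ∀ (p : ℝ → Prop) [DecidablePred p],
      Multiset.countP p P ≤ (n - m) + Multiset.countP p U := by
    intro p _
    conv_lhs => rw [hdecomp]
    rw [Multiset.countP_add]
    have := Multiset.countP_le_card p (P - U)
    omega
  have hnm : n - m ≤ f := by omega
  constructor
  · have h1 := hsplit (fun x => x ≤ t)
    have hpos : 0 < Multiset.countP (fun x => x ≤ t) U := by omega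
    obtain ⟨u, hu, hut⟩ := Multiset.countP_pos.mp hpos
    rw [ht]
    exact le_trans (mmin_le hu) hut
  · have h1 := hsplit (fun x => t ≤ x)
    have hpos : 0 < Multiset.countP (fun x => t ≤ x) U := by omega
    obtain ⟨u, hu, hut⟩ := Multiset.countP_pos.mp hpos
    rw [ht]
    exact le_trans hut (le_mmax hu)
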